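/- Fix an integer N ≥ 1, real numbers y_1, …, y_N, and positive real numbers σ_1, …, σ_N. Define, for (μ_0, τ_0) ∈ ℝ × (1, ∞), c(μ_0, τ_0) := ∫_1^{τ_0} ∫_1^5 (∏_{i=1}^N (σ_i² + k² τ²)^(−1/2)) · (1/τ) · [∫_{−∞}^{+∞} exp(−(1/2) Σ_{i=1}^N (y_i − μ)²/(σ_i² + k² τ²)) · exp(−(1/2)(μ − μ_0)²/τ²) dμ] dk dτ. Then the function (μ_0, τ_0) ↦ c(μ_0, τ_0) is continuous on the rectangle [−8, 68] × [5, 16]. -/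

import Mathlib

open Real MeasureTheory

section Aux

/-- clamp to `[a, b]` -/
noncomputable def myCl (a b x : ℝ) : ℝ := min b (max a x)

lemma myCl_continuous (a b : ℝ) : Continuous (myCl a b) :=
  continuous_const.min (continuous_const.max continuous_id)

lemma myCl_mem {a b : ℝ} (h : a ≤ b) (x : ℝ) : myCl a b x ∈ Set.Icc a b := by
  constructor
  · exact le_min h (le_max_left _ _)
  · exact min_le_left _ _

lemma myCl_eq_self {a b x : ℝ} (hx : x ∈ Set.Icc a b) : myCl a b x = x := by
  rw [myCl, max_eq_right hx.1, min_eq_right hx.2]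

variable (N : ℕ) (hN : 1 ≤ N) (y σ : Fin N → ℝ) (hσ : ∀ i, 0 < σ i)

/-- denominator, with clamped `k` and `τ` -/
noncomputable def myD (i : Fin N) (τ k : ℝ) : ℝ :=
  σ i ^ 2 + (myCl 1 5 k) ^ 2 * (myCl 1 16 τ) ^ 2

include hσ in
lemma myD_pos (i : Fin N) (τ k : ℝ) : 0 < myD N σ i τ k := by
  have h1 := (myCl_mem (by norm_num : (1:ℝ) ≤ 5) k).1
  have h2 := (myCl_mem (by norm_num : (1:ℝ) ≤ 16) τ).1
  have h3 := hσ i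
  have h4 : 0 < σ i ^ 2 := by positivity
  simp only [myD]
  nlinarith

lemma myD_le (i : Fin N) (τ k : ℝ) : myD N σ i τ k ≤ σ i ^ 2 + 6400 := by
  obtain ⟨hk1, hk2⟩ := myCl_mem (by norm_num : (1:ℝ) ≤ 5) k
  obtain ⟨ht1, ht2⟩ := myCl_mem (by norm_num : (1:ℝ) ≤ 16) τ
  have hk' : (myCl 1 5 k) ^ 2 ≤ 25 := by nlinarith
  have ht' : (myCl 1 16 τ) ^ 2 ≤ 256 := by nlinarith
  have : (myCl 1 5 k) ^ 2 * (myCl 1 16 τ) ^ 2 ≤ 25 * 256 :=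
    mul_le_mul hk' ht' (by positivity) (by norm_num)
  simp only [myD]; linarith

lemma myD_continuous (i : Fin N) :
    Continuous (fun q : ℝ × ℝ × ℝ => myD N σ i q.2.1 q.2.2) := by
  unfold myD myCl
  fun_prop

/-- the inner Gaussian-type integral, with clamped `k` and `τ`;
`q = (μ₀, τ, k)`. -/
noncomputable def myI (q : ℝ × ℝ × ℝ) : ℝ :=
  ∫ μ : ℝ, Real.exp (-(1/2) * ∑ i, (y i - μ) ^ 2 / myD N σ i q.2.1 q.2.2) *
    Real.exp (-(1/2) * (μ - q.1) ^ 2 / (myCl 1 16 q.2.1) ^ 2)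

include hN hσ in
lemma myI_continuous : Continuous (myI N y σ) := by
  have i0 : Fin N := ⟨0, hN⟩
  set C : ℝ := σ i0 ^ 2 + 6400 with hC
  have hCpos : 0 < C := by have := hσ i0; positivity
  apply continuous_of_dominated (bound := fun μ : ℝ => Real.exp (-(1/2) * (y i0 - μ) ^ 2 / C))
  · intro q
    apply Continuous.aestronglyMeasurable
    have h1 : Continuous fun μ : ℝ =>
        Real.exp (-(1/2) * ∑ i, (y i - μ) ^ 2 / myD N σ i q.2.1 q.2.2) := by
      apply Real.continuous_exp.comp
      apply Continuous.mul continuous_const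
      apply continuous_finset_sum
      intro i _
      exact (((continuous_const.sub continuous_id).pow 2).div_const _)
    have h2 : Continuous fun μ : ℝ =>
        Real.exp (-(1/2) * (μ - q.1) ^ 2 / (myCl 1 16 q.2.1) ^ 2) := by
      apply Real.continuous_exp.comp
      exact ((continuous_const.mul ((continuous_id.sub continuous_const).pow 2)).div_const _)
    exact h1.mul h2
  · intro q
    filter_upwards with μ
    have hD0 : 0 < myD N σ i0 q.2.1 q.2.2 := myD_pos N σ hσ i0 _ _
    have key1 : Real.exp (-(1/2) * ∑ i, (y i - μ) ^ 2 / myD N σ i q.2.1 q.2.2)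
        ≤ Real.exp (-(1/2) * (y i0 - μ) ^ 2 / C) := by
      apply Real.exp_le_exp.2
      have hsum : (y i0 - μ) ^ 2 / myD N σ i0 q.2.1 q.2.2
          ≤ ∑ i, (y i - μ) ^ 2 / myD N σ i q.2.1 q.2.2 := by
        apply Finset.single_le_sum (f := fun i => (y i - μ) ^ 2 / myD N σ i q.2.1 q.2.2)
          (fun i _ => div_nonneg (sq_nonneg _) (myD_pos N σ hσ i _ _).le) (Finset.mem_univ i0)
      have hdd : (y i0 - μ) ^ 2 / C ≤ (y i0 - μ) ^ 2 / myD N σ i0 q.2.1 q.2.2 := by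
        apply div_le_div_of_nonneg_left (by positivity) hD0 (myD_le N σ i0 _ _)
      rw [mul_div_assoc]
      linarith
    have key2 : Real.exp (-(1/2) * (μ - q.1) ^ 2 / (myCl 1 16 q.2.1) ^ 2) ≤ 1 := by
      apply Real.exp_le_one_iff.2
      have h2 := (myCl_mem (by norm_num : (1:ℝ) ≤ 16) q.2.1).1
      have : (0:ℝ) < (myCl 1 16 q.2.1) ^ 2 := by nlinarith
      have hnum : -(1/2) * (μ - q.1) ^ 2 ≤ 0 := by nlinarith [sq_nonneg (μ - q.1)]
      exact div_nonpos_of_nonpos_of_nonneg hnum this.le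
    have hn : ‖Real.exp (-(1/2) * ∑ i, (y i - μ) ^ 2 / myD N σ i q.2.1 q.2.2) *
        Real.exp (-(1/2) * (μ - q.1) ^ 2 / (myCl 1 16 q.2.1) ^ 2)‖
        = Real.exp (-(1/2) * ∑ i, (y i - μ) ^ 2 / myD N σ i q.2.1 q.2.2) *
          Real.exp (-(1/2) * (μ - q.1) ^ 2 / (myCl 1 16 q.2.1) ^ 2) := by
      rw [Real.norm_eq_abs, abs_of_pos (by positivity)]
    rw [hn]
    calc Real.exp (-(1/2) * ∑ i, (y i - μ) ^ 2 / myD N σ i q.2.1 q.2.2) *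
          Real.exp (-(1/2) * (μ - q.1) ^ 2 / (myCl 1 16 q.2.1) ^ 2)
        ≤ Real.exp (-(1/2) * (y i0 - μ) ^ 2 / C) * 1 := by
          exact mul_le_mul key1 key2 (Real.exp_pos _).le (Real.exp_pos _).le
      _ = Real.exp (-(1/2) * (y i0 - μ) ^ 2 / C) := mul_one _
  · have hb : (0:ℝ) < 1 / (2 * C) := by positivity
    have h := (integrable_exp_neg_mul_sq hb).comp_sub_right (y i0)
    apply h.congr
    filter_upwards with μ
    rw [show μ - y i0 = -(y i0 - μ) by ring]
    congr 1
    field_simp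
  · filter_upwards with μ
    have h1 : Continuous fun q : ℝ × ℝ × ℝ =>
        Real.exp (-(1/2) * ∑ i, (y i - μ) ^ 2 / myD N σ i q.2.1 q.2.2) := by
      apply Real.continuous_exp.comp
      apply Continuous.mul continuous_const
      apply continuous_finset_sum
      intro i _
      exact Continuous.div continuous_const (myD_continuous N σ i)
        (fun q => (myD_pos N σ hσ i _ _).ne')
    have h2 : Continuous fun q : ℝ × ℝ × ℝ =>
        Real.exp (-(1/2) * (μ - q.1) ^ 2 / (myCl 1 16 q.2.1) ^ 2) := by
      apply Real.continuous_exp.comp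
      apply Continuous.div
      · exact continuous_const.mul ((continuous_const.sub continuous_fst).pow 2)
      · exact ((myCl_continuous 1 16).comp (continuous_fst.comp continuous_snd)).pow 2
      · intro q
        have hm := (myCl_mem (by norm_num : (1:ℝ) ≤ 16) q.2.1).1
        have : (0:ℝ) < (myCl 1 16 q.2.1) ^ 2 := by nlinarith
        exact this.ne'
    exact h1.mul h2

/-- the integrand of the `k`-integral, with clamped `k` and `τ`;
`q = (μ₀, τ, k)`. -/
noncomputable def myH (q : ℝ × ℝ × ℝ) : ℝ :=
  (∏ i, (myD N σ i q.2.1 q.2.2) ^ (-(1:ℝ)/2)) * (1 / myCl 1 16 q.2.1) * myI N y σ q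

include hN hσ in
lemma myH_continuous : Continuous (myH N y σ) := by
  apply Continuous.mul
  apply Continuous.mul
  · apply continuous_finset_prod
    intro i _
    apply Continuous.rpow_const (myD_continuous N σ i)
    intro q
    exact Or.inl (myD_pos N σ hσ i _ _).ne'
  · apply Continuous.div continuous_const
      ((myCl_continuous 1 16).comp (continuous_fst.comp continuous_snd))
    intro q
    have hm := (myCl_mem (by norm_num : (1:ℝ) ≤ 16) q.2.1).1
    simp only [Function.comp_apply]
    linarith
  · exact myI_continuous N hN y σ hσ

/-- the `k`-integral, as a continuous function of `(μ₀, τ)`. -/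
noncomputable def myG (r : ℝ × ℝ) : ℝ :=
  ∫ k in (1:ℝ)..(5:ℝ), myH N y σ (r.1, r.2, k)

include hN hσ in
lemma myG_continuous : Continuous (myG N y σ) := by
  apply intervalIntegral.continuous_parametric_intervalIntegral_of_continuous'
    (f := fun (r : ℝ × ℝ) (k : ℝ) => myH N y σ (r.1, r.2, k)) (μ := volume)
  have : Continuous fun rk : (ℝ × ℝ) × ℝ => ((rk.1.1, rk.1.2, rk.2) : ℝ × ℝ × ℝ) := by
    fun_prop
  exact (myH_continuous N hN y σ hσ).comp this

include hN hσ in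
lemma myF_continuous :
    Continuous fun p : ℝ × ℝ => ∫ τ in (1:ℝ)..p.2, myG N y σ (p.1, τ) := by
  apply intervalIntegral.continuous_parametric_primitive_of_continuous
    (f := fun (a : ℝ) (τ : ℝ) => myG N y σ (a, τ)) (μ := volume)
  exact (myG_continuous N hN y σ hσ).comp (by fun_prop)

end Aux

/-- Continuity of the normalization constant `c(μ₀, τ₀)` of the posterior of the
linear random effects model on the rectangle `[-8, 68] × [5, 16]`. -/
theorem norm_const_continuousOn (N : ℕ) (hN : 1 ≤ N) (y σ : Fin N → ℝ)
    (hσ : ∀ i, 0 < σ i) :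
    ContinuousOn (fun p : ℝ × ℝ =>
      ∫ τ in (1:ℝ)..p.2, ∫ k in (1:ℝ)..(5:ℝ),
        (∏ i, (σ i ^ 2 + k ^ 2 * τ ^ 2) ^ (-(1:ℝ)/2)) * (1 / τ) *
          ∫ μ : ℝ, Real.exp (-(1/2) * ∑ i, (y i - μ) ^ 2 / (σ i ^ 2 + k ^ 2 * τ ^ 2)) *
            Real.exp (-(1/2) * (μ - p.1) ^ 2 / τ ^ 2))
      (Set.Icc (-8 : ℝ) 68 ×ˢ Set.Icc (5 : ℝ) 16) := by
  refine ((myF_continuous N hN y σ hσ).continuousOn).congr ?_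
  rintro ⟨μ₀, τ₀⟩ hp
  obtain ⟨hμ, hτ₀⟩ := hp
  simp only
  apply intervalIntegral.integral_congr
  intro τ hτ
  rw [Set.uIcc_of_le (by linarith [hτ₀.1] : (1:ℝ) ≤ τ₀)] at hτ
  have hτm : τ ∈ Set.Icc (1:ℝ) 16 := ⟨hτ.1, le_trans hτ.2 hτ₀.2⟩
  simp only [myG]
  apply intervalIntegral.integral_congr
  intro k hk
  rw [Set.uIcc_of_le (by norm_num : (1:ℝ) ≤ 5)] at hk
  simp only [myH, myI, myD, myCl_eq_self hτm, myCl_eq_self hk]
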